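/- Every Sturmian word satisfies property R_2, i.e., every factor has exactly two return words. -/

import Mathlib

variable {A : Type*}

/-- The factor of `u` of length `n` starting at position `j`. -/
def factorAt (u : ℕ → A) (j n : ℕ) : List A :=
  (List.range n).map (fun i => u (j + i))

/-- `j` is an occurrence of the finite word `w` in `u`. -/
def OccursAt (u : ℕ → A) (w : List A) (j : ℕ) : Prop :=
  factorAt u j w.length = w

/-- `w` is a factor of the infinite word `u`. -/
def IsFactor (u : ℕ → A) (w : List A) : Prop :=
  ∃ j, OccursAt u w j

/-- `v` is a return word of `w` in `u`: the word between two successive occurrences of `w`. -/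
def IsReturnWord (u : ℕ → A) (w v : List A) : Prop :=
  ∃ j k, j < k ∧ OccursAt u w j ∧ OccursAt u w k ∧
    (∀ l, j < l → l < k → ¬ OccursAt u w l) ∧ v = factorAt u j (k - j)

/-- The set `R(w)` of return words of `w` in `u`. -/
def returnWords (u : ℕ → A) (w : List A) : Set (List A) :=
  {v | IsReturnWord u w v}

/-- Property `R_m`: every factor of `u` has exactly `m` return words. -/
def PropertyR (u : ℕ → A) (m : ℕ) : Prop :=
  ∀ w, IsFactor u w → (returnWords u w).Finite ∧ (returnWords u w).ncard = m

/-- The set of left extensions of `w`. -/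
def leftExt (u : ℕ → A) (w : List A) : Set A := {a | IsFactor u (a :: w)}

/-- The set of right extensions of `w`. -/
def rightExt (u : ℕ → A) (w : List A) : Set A := {b | IsFactor u (w ++ [b])}

def LeftSpecial (u : ℕ → A) (w : List A) : Prop := 2 ≤ (leftExt u w).ncard

def RightSpecial (u : ℕ → A) (w : List A) : Prop := 2 ≤ (rightExt u w).ncard

/-- The set of pairs `(a, b)` such that `a w b` is a factor of `u`. -/
def extPairs (u : ℕ → A) (w : List A) : Set (A × A) :=
  {p | IsFactor u (p.1 :: (w ++ [p.2]))}

/-- The bilateral order `B(w)`. -/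
noncomputable def bilateralOrder (u : ℕ → A) (w : List A) : ℤ :=
  ((extPairs u w).ncard : ℤ) - (leftExt u w).ncard - (rightExt u w).ncard + 1

/-- `w` is a weak bispecial factor of `u`. -/
def WeakBispecial (u : ℕ → A) (w : List A) : Prop :=
  IsFactor u w ∧ bilateralOrder u w < 0

/-- The factor complexity of `u`. -/
noncomputable def Complexity (u : ℕ → A) (n : ℕ) : ℕ :=
  {w : List A | w.length = n ∧ IsFactor u w}.ncard

/-- `u` is recurrent: every factor occurs at least twice. -/
def Recurrent (u : ℕ → A) : Prop :=
  ∀ w, IsFactor u w → ∃ j k, j < k ∧ OccursAt u w j ∧ OccursAt u w k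

/-- `u` is uniformly recurrent. -/
def UniformlyRecurrent (u : ℕ → A) : Prop :=
  ∀ n : ℕ, ∃ N : ℕ, ∀ w, IsFactor u w → w.length = N →
    ∀ v, IsFactor u v → v.length = n → v <:+: w

def EventuallyPeriodic (u : ℕ → A) : Prop :=
  ∃ p, 0 < p ∧ ∃ N, ∀ n, N ≤ n → u (n + p) = u n

/-- `w` is a maximal right special factor. -/
def MaximalRightSpecial (u : ℕ → A) (w : List A) : Prop :=
  IsFactor u w ∧ RightSpecial u w ∧
    ∀ v, IsFactor u v → RightSpecial u v → w <:+ v → v = w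

/-- The return word `v` of `w` starts with the letter `b`. -/
def StartsWithLetter (w v : List A) (b : A) : Prop := (w ++ [b]) <+: (v ++ w)
section AuxBasic

open List

variable {A : Type*}

lemma factorAt_length (u : ℕ → A) (j n : ℕ) : (factorAt u j n).length = n := by
  simp [factorAt]

lemma factorAt_eq_iff {u u' : ℕ → A} {j k n : ℕ} :
    factorAt u j n = factorAt u' k n ↔ ∀ i < n, u (j + i) = u' (k + i) := by
  constructor
  · intro h i hi
    have h1 : (factorAt u j n)[i]'(by simpa [factorAt_length]) =
        (factorAt u' k n)[i]'(by simpa [factorAt_length]) := by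
      simp only [h]
    simpa [factorAt] using h1
  · intro h
    apply List.ext_getElem (by simp [factorAt_length])
    intro i h1 h2
    simp only [factorAt, List.getElem_map, List.getElem_range]
    exact h i (by simpa [factorAt_length] using h1)

lemma occursAt_factorAt (u : ℕ → A) (j n : ℕ) : OccursAt u (factorAt u j n) j := by
  unfold OccursAt
  rw [factorAt_length]

lemma isFactor_factorAt (u : ℕ → A) (j n : ℕ) : IsFactor u (factorAt u j n) :=
  ⟨j, occursAt_factorAt u j n⟩

lemma OccursAt.factorAt_eq {u : ℕ → A} {w : List A} {j : ℕ} (h : OccursAt u w j) :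
    w = factorAt u j w.length := h.symm

lemma OccursAt.letter {u : ℕ → A} {w : List A} {j : ℕ} (h : OccursAt u w j)
    {i : ℕ} (hi : i < w.length) : u (j + i) = w[i] := by
  have h2 : (factorAt u j w.length)[i]'(by simp [factorAt_length, hi]) = w[i] :=
    List.getElem_of_eq h _
  simpa [factorAt] using h2

lemma occursAt_congr {u : ℕ → A} {w : List A} {j k : ℕ} (hj : OccursAt u w j)
    (h : ∀ i < w.length, u (k + i) = u (j + i)) : OccursAt u w k := by
  have h2 : factorAt u k w.length = factorAt u j w.length := factorAt_eq_iff.mpr h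
  unfold OccursAt at hj ⊢
  rw [h2, hj]

lemma factorAt_succ (u : ℕ → A) (j n : ℕ) :
    factorAt u j (n + 1) = factorAt u j n ++ [u (j + n)] := by
  simp [factorAt, List.range_succ]

lemma isFactor_extend (u : ℕ → A) (j n : ℕ) :
    IsFactor u (factorAt u j n ++ [u (j + n)]) := by
  rw [← factorAt_succ]; exact isFactor_factorAt u j (n + 1)

lemma factorAt_take (u : ℕ → A) (j n m : ℕ) :
    (factorAt u j n).take m = factorAt u j (min m n) := by
  apply List.ext_getElem (by simp [factorAt_length])
  intro i h1 h2
  simp [factorAt]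

lemma factorAt_drop (u : ℕ → A) (j n t : ℕ) :
    (factorAt u j n).drop t = factorAt u (j + t) (n - t) := by
  apply List.ext_getElem (by simp [factorAt_length])
  intro i h1 h2
  simp only [factorAt, List.getElem_drop, List.getElem_map, List.getElem_range]
  congr 1
  omega

lemma occursAt_nil (u : ℕ → A) (j : ℕ) : OccursAt u ([] : List A) j := by
  simp [OccursAt, factorAt]

end AuxBasic
section AuxComplexity

variable {A : Type*}

lemma finite_factorSet [Finite A] (u : ℕ → A) (n : ℕ) :
    {w : List A | w.length = n ∧ IsFactor u w}.Finite :=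
  (List.finite_length_eq A n).subset (fun _ hw => hw.1)

lemma complexity_zero (u : ℕ → A) : Complexity u 0 = 1 := by
  unfold Complexity
  have : {w : List A | w.length = 0 ∧ IsFactor u w} = {([] : List A)} := by
    ext w
    simp only [Set.mem_setOf_eq, Set.mem_singleton_iff, List.length_eq_zero_iff]
    constructor
    · rintro ⟨rfl, -⟩; rfl
    · rintro rfl; exact ⟨rfl, ⟨0, occursAt_nil u 0⟩⟩
  rw [this, Set.ncard_singleton]

lemma factorSet_eq_take_image (u : ℕ → A) (m : ℕ) :
    {w : List A | w.length = m ∧ IsFactor u w} =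
      (fun v : List A => v.take m) '' {w : List A | w.length = m + 1 ∧ IsFactor u w} := by
  ext w
  constructor
  · rintro ⟨hl, j, hj⟩
    refine ⟨factorAt u j (m + 1), ⟨factorAt_length u j (m+1), isFactor_factorAt u j (m+1)⟩, ?_⟩
    beta_reduce
    rw [factorAt_take]
    have : min m (m+1) = m := by omega
    rw [this, ← hl, ← hj.factorAt_eq]
  · rintro ⟨v, ⟨hl, j, hj⟩, rfl⟩
    constructor
    · rw [List.length_take, hl]; omega
    · refine ⟨j, ?_⟩
      have hv : v = factorAt u j (m + 1) := by rw [hj.factorAt_eq, hl]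
      beta_reduce
      rw [hv, factorAt_take, (show min m (m+1) = m by omega)]
      exact occursAt_factorAt u j m

lemma complexity_mono [Finite A] (u : ℕ → A) (m : ℕ) :
    Complexity u m ≤ Complexity u (m + 1) := by
  unfold Complexity
  rw [factorSet_eq_take_image]
  exact Set.ncard_image_le (finite_factorSet u (m+1))

/-- If the complexity does not increase from `m` to `m+1`, every factor of length `m`
has a unique right extension. -/
lemma unique_ext_of_complexity_eq [Finite A] {u : ℕ → A} {m : ℕ}
    (h : Complexity u (m + 1) ≤ Complexity u m) :
    ∀ w b b', IsFactor u (w ++ [b]) → IsFactor u (w ++ [b']) → w.length = m → b = b' := by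
  by_contra hc
  push_neg at hc
  obtain ⟨w, b, b', hb, hb', hlw, hbb'⟩ := hc
  set S := {v : List A | v.length = m ∧ IsFactor u v} with hS
  set T := {v : List A | v.length = m + 1 ∧ IsFactor u v} with hT
  have hTfin : T.Finite := finite_factorSet u (m+1)
  have hwbT : w ++ [b'] ∈ T := ⟨by simp [hlw], hb'⟩
  have hsub : S ⊆ (fun v : List A => v.take m) '' (T \ {w ++ [b']}) := by
    rintro w' ⟨hl, j, hj⟩
    by_cases hww : w' = w
    · subst hww
      refine ⟨w' ++ [b], ⟨⟨by simp [hlw], hb⟩, ?_⟩, ?_⟩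
      · simp only [Set.mem_singleton_iff]
        intro heq
        exact hbb' (by simpa using heq)
      · beta_reduce
        rw [← hlw, List.take_left]
    · refine ⟨factorAt u j (m+1), ⟨⟨factorAt_length u j (m+1), isFactor_factorAt u j (m+1)⟩, ?_⟩, ?_⟩
      · simp only [Set.mem_singleton_iff]
        intro heq
        apply hww
        have h1 : (factorAt u j (m+1)).take m = w' := by
          rw [factorAt_take, (show min m (m+1) = m by omega), ← hl, ← hj.factorAt_eq]
        have h2 : ((w ++ [b']).take m) = w := by rw [← hlw, List.take_left]
        rw [← h1, heq, h2]
      · beta_reduce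
        rw [factorAt_take]
        have : min m (m+1) = m := by omega
        rw [this, ← hl, ← hj.factorAt_eq]
  have h1 : Complexity u m ≤ ((fun v : List A => v.take m) '' (T \ {w ++ [b']})).ncard :=
    Set.ncard_le_ncard hsub ((hTfin.diff).image _)
  have h2 : ((fun v : List A => v.take m) '' (T \ {w ++ [b']})).ncard ≤ (T \ {w ++ [b']}).ncard :=
    Set.ncard_image_le (hTfin.diff)
  have h3 : (T \ {w ++ [b']}).ncard < T.ncard :=
    Set.ncard_diff_singleton_lt_of_mem hwbT hTfin
  have h4 : T.ncard = Complexity u (m+1) := rfl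
  omega

/-- Morse–Hedlund: low complexity implies eventual periodicity. -/
lemma eventuallyPeriodic_of_complexity_le [Finite A] {u : ℕ → A} {n : ℕ}
    (h : Complexity u n ≤ n) : EventuallyPeriodic u := by
  have hex : ∃ m, Complexity u (m + 1) ≤ Complexity u m := by
    by_contra hc
    push_neg at hc
    have hgrow : ∀ k, k + 1 ≤ Complexity u k := by
      intro k
      induction k with
      | zero => simp [complexity_zero]
      | succ k ih => have := hc k; omega
    have := hgrow n
    omega
  obtain ⟨m, hm⟩ := hex
  have hu := unique_ext_of_complexity_eq hm
  have det : ∀ i j, factorAt u i m = factorAt u j m → u (i + m) = u (j + m) := by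
    intro i j hij
    refine hu (factorAt u i m) (u (i + m)) (u (j + m)) (isFactor_extend u i m) ?_
      (factorAt_length u i m)
    rw [hij]
    exact isFactor_extend u j m
  have key : ∀ i j, factorAt u i m = factorAt u j m →
      ∀ t, factorAt u (i + t) m = factorAt u (j + t) m := by
    intro i j hij t
    induction t with
    | zero => simpa using hij
    | succ t ih =>
      rw [factorAt_eq_iff] at ih ⊢
      intro r hr
      by_cases hrm : r + 1 < m
      · have := ih (r + 1) hrm
        convert this using 2 <;> omega
      · have hdet := det (i + t) (j + t) (factorAt_eq_iff.mpr ih)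
        convert hdet using 2 <;> omega
  have prop : ∀ i j, factorAt u i m = factorAt u j m → ∀ s, u (i + s) = u (j + s) := by
    intro i j hij s
    by_cases hs : s < m
    · exact factorAt_eq_iff.mp hij s hs
    · have := det (i + (s - m)) (j + (s - m)) (key i j hij (s - m))
      convert this using 2 <;> omega
  have hfin : Finite {l : List A | l.length = m} := (List.finite_length_eq A m).to_subtype
  obtain ⟨i, j, hne, hfe⟩ := Finite.exists_ne_map_eq_of_infinite
    (fun i : ℕ => (⟨factorAt u i m, factorAt_length u i m⟩ : {l : List A | l.length = m}))
  have hfe' : factorAt u i m = factorAt u j m := by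
    simpa using congrArg Subtype.val hfe
  have main : ∀ i j : ℕ, i < j → factorAt u i m = factorAt u j m → EventuallyPeriodic u := by
    intro i j hlt hij
    refine ⟨j - i, by omega, i, fun x hx => ?_⟩
    have := prop i j hij (x - i)
    convert this.symm using 2 <;> omega
  rcases hne.lt_or_gt with hlt | hlt
  · exact main i j hlt hfe'
  · exact main j i hlt hfe'.symm

end AuxComplexity
section AuxSpecial

variable {A : Type*}

/-- In an aperiodic word of full Sturmian complexity, every factor occurs beyond any bound. -/
lemma occurs_beyond [Finite A] {u : ℕ → A} (haper : ¬ EventuallyPeriodic u)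
    (hcompl : ∀ n, Complexity u n = n + 1) :
    ∀ w : List A, IsFactor u w → ∀ M, ∃ j, M < j ∧ OccursAt u w j := by
  intro w hw M
  by_contra hc
  push_neg at hc
  rcases eq_or_ne w [] with rfl | hne
  · exact hc (M + 1) (by omega) (occursAt_nil u (M + 1))
  set n := w.length with hn
  set u' : ℕ → A := fun x => u (x + (M + 1)) with hu'
  have htrans : ∀ (v : List A) (j : ℕ), OccursAt u' v j → OccursAt u v (j + (M + 1)) := by
    intro v j hj
    have h2 : factorAt u (j + (M + 1)) v.length = factorAt u' j v.length :=
      factorAt_eq_iff.mpr (fun i hi => by show u _ = u _; congr 1; omega)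
    unfold OccursAt at hj ⊢
    rw [h2, hj]
  have hsub : {v : List A | v.length = n ∧ IsFactor u' v} ⊆
      {v : List A | v.length = n ∧ IsFactor u v} \ {w} := by
    rintro v ⟨hl, j, hj⟩
    refine ⟨⟨hl, ⟨j + (M + 1), htrans v j hj⟩⟩, ?_⟩
    simp only [Set.mem_singleton_iff]
    rintro rfl
    exact hc (j + (M + 1)) (by omega) (htrans v j hj)
  have hwmem : w ∈ {v : List A | v.length = n ∧ IsFactor u v} := ⟨rfl, hw⟩
  have hfin : ({v : List A | v.length = n ∧ IsFactor u v}).Finite := finite_factorSet u n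
  have hC' : Complexity u' n ≤ n := by
    have h1 : Complexity u' n ≤ ({v : List A | v.length = n ∧ IsFactor u v} \ {w}).ncard :=
      Set.ncard_le_ncard hsub (hfin.diff)
    have h2 : ({v : List A | v.length = n ∧ IsFactor u v} \ {w}).ncard =
        {v : List A | v.length = n ∧ IsFactor u v}.ncard - 1 :=
      Set.ncard_diff_singleton_of_mem hwmem
    have h3 : {v : List A | v.length = n ∧ IsFactor u v}.ncard = n + 1 := hcompl n
    omega
  obtain ⟨p, hp, N, hN⟩ := eventuallyPeriodic_of_complexity_le hC'
  refine haper ⟨p, hp, N + (M + 1), fun x hx => ?_⟩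
  have h2 : u ((x - (M + 1)) + p + (M + 1)) = u ((x - (M + 1)) + (M + 1)) :=
    hN (x - (M + 1)) (by omega)
  convert h2 using 2 <;> omega

lemma rightExt_finite [Finite A] (u : ℕ → A) (p : List A) : (rightExt u p).Finite :=
  Set.toFinite _

lemma rightSpecial_of_two {u : ℕ → A} {p : List A} {x y : A} [Finite A]
    (hx : x ∈ rightExt u p) (hy : y ∈ rightExt u p) (hxy : x ≠ y) : RightSpecial u p := by
  unfold RightSpecial
  calc (2 : ℕ) = ({x, y} : Set A).ncard := (Set.ncard_pair hxy).symm
    _ ≤ (rightExt u p).ncard := Set.ncard_le_ncard (by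
        intro a ha
        rcases ha with rfl | ha
        · exact hx
        · rw [Set.mem_singleton_iff] at ha; subst ha; exact hy) (rightExt_finite u p)

/-- Uniqueness of the right special factor of each length for words of complexity `n+1`
over a binary alphabet. -/
lemma rightSpecial_unique [Fintype A] (hcard : Fintype.card A = 2) {u : ℕ → A}
    (hcompl : ∀ n, Complexity u n = n + 1) {p q : List A}
    (hp : IsFactor u p) (hq : IsFactor u q) (hl : p.length = q.length)
    (hps : RightSpecial u p) (hqs : RightSpecial u q) : p = q := by
  classical
  by_contra hne
  set m := p.length with hm
  obtain ⟨b1, hb1, b2, hb2, hbne⟩ := (Set.one_lt_ncard (rightExt_finite u p)).mp hps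
  obtain ⟨d1, hd1, d2, hd2, hdne⟩ := (Set.one_lt_ncard (rightExt_finite u q)).mp hqs
  set S := {v : List A | v.length = m ∧ IsFactor u v} with hS
  set T := {v : List A | v.length = m + 1 ∧ IsFactor u v} with hT
  have hTfin : T.Finite := finite_factorSet u (m + 1)
  -- canonical extension map
  set F : List A → List A := fun v => if h : IsFactor u v then v ++ [u (h.choose + v.length)] else v
    with hF
  have hFspec : ∀ v : List A, IsFactor u v → ∃ c : A, F v = v ++ [c] ∧ IsFactor u (v ++ [c]) := by
    intro v hv
    refine ⟨u (hv.choose + v.length), by simp [hF, hv], ?_⟩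
    have hocc : OccursAt u v hv.choose := hv.choose_spec
    have h1 : v ++ [u (hv.choose + v.length)] =
        factorAt u hv.choose v.length ++ [u (hv.choose + v.length)] := by
      rw [← hocc.factorAt_eq]
    rw [h1, ← factorAt_succ]
    exact isFactor_factorAt _ _ _
  -- choose alternative extensions avoiding the canonical ones
  obtain ⟨cp, hcpF, hcpf⟩ := hFspec p hp
  obtain ⟨cq, hcqF, hcqf⟩ := hFspec q hq
  obtain ⟨b, hbmem, hbne'⟩ : ∃ b, b ∈ rightExt u p ∧ b ≠ cp := by
    by_cases h1 : b1 = cp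
    · exact ⟨b2, hb2, by rw [← h1]; exact fun h => hbne h.symm⟩
    · exact ⟨b1, hb1, h1⟩
  obtain ⟨d, hdmem, hdne'⟩ : ∃ d, d ∈ rightExt u q ∧ d ≠ cq := by
    by_cases h1 : d1 = cq
    · exact ⟨d2, hd2, by rw [← h1]; exact fun h => hdne h.symm⟩
    · exact ⟨d1, hd1, h1⟩
  -- the enlarged set
  have hFS : F '' S ⊆ T := by
    rintro x ⟨v, ⟨hvl, hvf⟩, rfl⟩
    obtain ⟨c, hc1, hc2⟩ := hFspec v hvf
    rw [hc1]
    exact ⟨by simp [hvl], hc2⟩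
  have hSfin : S.Finite := finite_factorSet u m
  have hpS : p ∈ S := ⟨rfl, hp⟩
  have hqS : q ∈ S := ⟨hl.symm, hq⟩
  have htake : ∀ v : List A, v.length = m → ∀ c : A, (v ++ [c]).take m = v := by
    intro v hv c
    rw [← hv]
    exact List.take_left
  have hinj : Set.InjOn F S := by
    rintro v1 ⟨hl1, hf1⟩ v2 ⟨hl2, hf2⟩ heq
    obtain ⟨c1, hc1, -⟩ := hFspec v1 hf1
    obtain ⟨c2, hc2, -⟩ := hFspec v2 hf2
    rw [hc1, hc2] at heq
    rw [← htake v1 hl1 c1, ← htake v2 hl2 c2, heq]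
  have hcard1 : (F '' S).ncard = m + 1 := by
    rw [Set.ncard_image_of_injOn hinj]
    exact hcompl m
  have hpb_nmem : p ++ [b] ∉ F '' S := by
    rintro ⟨v, ⟨hvl, hvf⟩, heq⟩
    obtain ⟨c, hc1, -⟩ := hFspec v hvf
    rw [hc1] at heq
    have h1 : v = p := by
      have := congrArg (fun l : List A => l.take m) heq
      simpa [htake v hvl, htake p rfl] using this
    subst h1
    rw [hcpF] at hc1
    have h2 := List.append_cancel_left (hc1.trans heq)
    exact hbne' (by simpa using h2.symm)
  have hqd_nmem : q ++ [d] ∉ insert (p ++ [b]) (F '' S) := by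
    rintro (heq | ⟨v, ⟨hvl, hvf⟩, heq⟩)
    · have h1 : q = p := by
        have := congrArg (fun l : List A => l.take m) heq
        simpa [htake q hl.symm, htake p rfl] using this
      exact hne h1.symm
    · obtain ⟨c, hc1, -⟩ := hFspec v hvf
      rw [hc1] at heq
      have h1 : v = q := by
        have := congrArg (fun l : List A => l.take m) heq
        simpa [htake v hvl, htake q hl.symm] using this
      subst h1
      rw [hcqF] at hc1
      have h2 := List.append_cancel_left (hc1.trans heq)
      exact hdne' (by simpa using h2.symm)
  have hbigsub : insert (q ++ [d]) (insert (p ++ [b]) (F '' S)) ⊆ T := by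
    intro x hx
    rcases hx with rfl | rfl | hx
    · exact ⟨by simp [← hl], hdmem⟩
    · exact ⟨by simp [hm], hbmem⟩
    · exact hFS hx
  have hcard2 : (insert (q ++ [d]) (insert (p ++ [b]) (F '' S))).ncard = m + 3 := by
    rw [Set.ncard_insert_of_notMem hqd_nmem (((hSfin.image F).insert _)),
      Set.ncard_insert_of_notMem hpb_nmem (hSfin.image F)]
    omega
  have hle : (insert (q ++ [d]) (insert (p ++ [b]) (F '' S))).ncard ≤ T.ncard :=
    Set.ncard_le_ncard hbigsub hTfin
  have hTcard : T.ncard = m + 2 := hcompl (m + 1)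
  omega

/-- A suffix of a right special factor is right special. -/
lemma rightSpecial_drop [Finite A] {u : ℕ → A} {q : List A} {t : ℕ} (ht : t ≤ q.length)
    (h : RightSpecial u q) : RightSpecial u (q.drop t) := by
  have hsub : rightExt u q ⊆ rightExt u (q.drop t) := by
    rintro b ⟨j, hj⟩
    refine ⟨j + t, ?_⟩
    have h1 : q ++ [b] = factorAt u j (q.length + 1) := by
      have := hj.factorAt_eq
      simpa using this
    have h2 : q.drop t ++ [b] = factorAt u (j + t) (q.length + 1 - t) := by
      have : q.drop t ++ [b] = (q ++ [b]).drop t := by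
        rw [List.drop_append_of_le_length ht]
      rw [this, h1, factorAt_drop]
    rw [h2]
    exact occursAt_factorAt u (j + t) _
  unfold RightSpecial at h ⊢
  exact le_trans h (Set.ncard_le_ncard hsub (rightExt_finite u _))

end AuxSpecial
section AuxCore

open scoped Classical

variable {A : Type*}

/-- Divergence of two distinct return words. -/
lemma return_diverge {u : ℕ → A} {w : List A} {j1 k1 j2 k2 : ℕ}
    (hj1 : OccursAt u w j1) (hk1 : OccursAt u w k1) (hlt1 : j1 < k1)
    (hbet1 : ∀ l, j1 < l → l < k1 → ¬OccursAt u w l)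
    (hj2 : OccursAt u w j2) (hk2 : OccursAt u w k2) (hlt2 : j2 < k2)
    (hbet2 : ∀ l, j2 < l → l < k2 → ¬OccursAt u w l)
    (hvne : factorAt u j1 (k1 - j1) ≠ factorAt u j2 (k2 - j2)) :
    ∃ d, w.length ≤ d ∧ d < (k1 - j1) + w.length ∧ d < (k2 - j2) + w.length ∧
      (∀ i < d, u (j1 + i) = u (j2 + i)) ∧ u (j1 + d) ≠ u (j2 + d) := by
  set n := w.length with hn
  set l1 := k1 - j1 with hl1
  set l2 := k2 - j2 with hl2
  have hD : ∃ i, i < min l1 l2 + n ∧ u (j1 + i) ≠ u (j2 + i) := by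
    by_contra hcon
    push_neg at hcon
    rcases lt_trichotomy l1 l2 with hc | hc | hc
    · refine hbet2 (j2 + l1) (by omega) (by omega) ?_
      apply occursAt_congr hk1
      intro i hi
      have ea : u (j2 + l1 + i) = u (j2 + (l1 + i)) := by congr 1; omega
      have eb : u (j1 + (l1 + i)) = u (k1 + i) := by congr 1; omega
      rw [ea, ← hcon (l1 + i) (by omega), eb]
    · apply hvne
      rw [hc, factorAt_eq_iff]
      intro i hi
      exact hcon i (by omega)
    · refine hbet1 (j1 + l2) (by omega) (by omega) ?_
      apply occursAt_congr hk2
      intro i hi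
      have ea : u (j1 + l2 + i) = u (j1 + (l2 + i)) := by congr 1; omega
      have eb : u (j2 + (l2 + i)) = u (k2 + i) := by congr 1; omega
      rw [ea, hcon (l2 + i) (by omega), eb]
  obtain ⟨i0, hi0, hi0ne⟩ := hD
  have hexP : ∃ i, u (j1 + i) ≠ u (j2 + i) := ⟨i0, hi0ne⟩
  set d := Nat.find hexP with hd
  have hdspec : u (j1 + d) ≠ u (j2 + d) := Nat.find_spec hexP
  have hdle : d ≤ i0 := Nat.find_le hi0ne
  have hagree : ∀ i < d, u (j1 + i) = u (j2 + i) := by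
    intro i hi
    have := Nat.find_min hexP hi
    exact not_not.mp this
  have hnd : n ≤ d := by
    by_contra hcon
    push_neg at hcon
    exact hdspec (by rw [hj1.letter (show d < w.length by omega),
      hj2.letter (show d < w.length by omega)])
  exact ⟨d, hnd, by omega, by omega, hagree, hdspec⟩

/-- Two nested right special prefixes of a complete return word give a contradiction. -/
lemma nested_specials [Fintype A] (hcard : Fintype.card A = 2) {u : ℕ → A}
    (hcompl : ∀ n, Complexity u n = n + 1) {w : List A} {j k d e : ℕ}
    (hj : OccursAt u w j) (hlt : j < k)
    (hbet : ∀ l, j < l → l < k → ¬OccursAt u w l)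
    (hnd : w.length ≤ d) (hde : d < e) (he : e < (k - j) + w.length)
    (hdS : RightSpecial u (factorAt u j d)) (heS : RightSpecial u (factorAt u j e)) : False := by
  have h1 : (factorAt u j e).drop (e - d) = factorAt u (j + (e - d)) d := by
    rw [factorAt_drop]
    congr 1
    omega
  have h2 : RightSpecial u (factorAt u (j + (e - d)) d) := by
    rw [← h1]
    exact rightSpecial_drop (by rw [factorAt_length]; omega) heS
  have h3 : factorAt u (j + (e - d)) d = factorAt u j d :=
    rightSpecial_unique hcard hcompl (isFactor_factorAt _ _ _) (isFactor_factorAt _ _ _)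
      (by rw [factorAt_length, factorAt_length]) h2 hdS
  have hocc : OccursAt u w (j + (e - d)) := by
    apply occursAt_congr hj
    intro i hi
    exact factorAt_eq_iff.mp h3 i (by omega)
  exact hbet (j + (e - d)) (by omega) (by omega) hocc

/-- There cannot be three distinct return words of the same factor. -/
lemma atMostTwo_returnWords [Fintype A] (hcard : Fintype.card A = 2) {u : ℕ → A}
    (hcompl : ∀ n, Complexity u n = n + 1) {w v1 v2 v3 : List A}
    (h1 : IsReturnWord u w v1) (h2 : IsReturnWord u w v2) (h3 : IsReturnWord u w v3)
    (h12 : v1 ≠ v2) (h13 : v1 ≠ v3) (h23 : v2 ≠ v3) : False := by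
  obtain ⟨j1, k1, hlt1, hj1, hk1, hbet1, hv1⟩ := h1
  obtain ⟨j2, k2, hlt2, hj2, hk2, hbet2, hv2⟩ := h2
  obtain ⟨j3, k3, hlt3, hj3, hk3, hbet3, hv3⟩ := h3
  subst hv1 hv2 hv3
  set n := w.length with hn
  obtain ⟨d12, h12n, h12a, h12b, h12ag, h12ne⟩ :=
    return_diverge hj1 hk1 hlt1 hbet1 hj2 hk2 hlt2 hbet2 h12
  obtain ⟨d13, h13n, h13a, h13b, h13ag, h13ne⟩ :=
    return_diverge hj1 hk1 hlt1 hbet1 hj3 hk3 hlt3 hbet3 h13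
  obtain ⟨d23, h23n, h23a, h23b, h23ag, h23ne⟩ :=
    return_diverge hj2 hk2 hlt2 hbet2 hj3 hk3 hlt3 hbet3 h23
  -- right extensions membership helper
  have hmem : ∀ j d : ℕ, u (j + d) ∈ rightExt u (factorAt u j d) := by
    intro j d
    show IsFactor u (factorAt u j d ++ [u (j + d)])
    exact isFactor_extend u j d
  have hmem' : ∀ j j' d : ℕ, (∀ i < d, u (j + i) = u (j' + i)) →
      u (j' + d) ∈ rightExt u (factorAt u j d) := by
    intro j j' d hag
    have : factorAt u j d = factorAt u j' d := factorAt_eq_iff.mpr hag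
    rw [this]
    exact hmem j' d
  have hS12 : RightSpecial u (factorAt u j1 d12) :=
    rightSpecial_of_two (hmem j1 d12) (hmem' j1 j2 d12 h12ag) h12ne
  have hS13 : RightSpecial u (factorAt u j1 d13) :=
    rightSpecial_of_two (hmem j1 d13) (hmem' j1 j3 d13 h13ag) h13ne
  have hS23 : RightSpecial u (factorAt u j2 d23) :=
    rightSpecial_of_two (hmem j2 d23) (hmem' j2 j3 d23 h23ag) h23ne
  -- also from the other side
  have hS12' : RightSpecial u (factorAt u j2 d12) := by
    rw [← factorAt_eq_iff.mpr h12ag]; exact hS12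
  have hS13' : RightSpecial u (factorAt u j3 d13) := by
    rw [← factorAt_eq_iff.mpr h13ag]; exact hS13
  have hS23' : RightSpecial u (factorAt u j3 d23) := by
    rw [← factorAt_eq_iff.mpr h23ag]; exact hS23
  rcases Nat.lt_trichotomy d12 d13 with hcc | hcc | hcc
  · exact nested_specials hcard hcompl hj1 hlt1 hbet1 h12n hcc h13a hS12 hS13
  · rcases Nat.lt_trichotomy d12 d23 with hdd | hdd | hdd
    · exact nested_specials hcard hcompl hj2 hlt2 hbet2 h12n hdd h23a hS12' hS23
    · -- d12 = d13 = d23 =: d, three pairwise distinct letters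
      subst hcc
      rw [← hdd] at h23ne
      -- letters u (j1+d12), u (j2+d12), u (j3+d12) pairwise distinct
      have hc3 : ({u (j1 + d12), u (j2 + d12), u (j3 + d12)} : Finset A).card = 3 := by
        rw [Finset.card_insert_of_notMem (by simp [h12ne, h13ne]),
          Finset.card_insert_of_notMem (by simp [h23ne]), Finset.card_singleton]
      have hle : ({u (j1 + d12), u (j2 + d12), u (j3 + d12)} : Finset A).card ≤ 2 := by
        rw [← hcard]
        exact Finset.card_le_univ _
      omega
    · exact nested_specials hcard hcompl hj2 hlt2 hbet2 h23n hdd h12b hS23 hS12'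
  · exact nested_specials hcard hcompl hj1 hlt1 hbet1 h13n hcc h12a hS13 hS12

end AuxCore
/-- Every Sturmian word (an aperiodic word over a two-letter alphabet with
complexity `C(n) = n + 1` for all `n`) satisfies property `R_2`. -/
theorem sturmian_propertyR_two [Fintype A] (hcard : Fintype.card A = 2) (u : ℕ → A)
    (haper : ¬ EventuallyPeriodic u) (hcompl : ∀ n, Complexity u n = n + 1) :
    PropertyR u 2 := by
  classical
  intro w hw
  have hrec := occurs_beyond haper hcompl w hw
  have hnext : ∀ j : ℕ, ∃ k, j < k ∧ OccursAt u w k ∧ ∀ l, j < l → l < k → ¬OccursAt u w l := by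
    intro j
    have hex : ∃ k, j < k ∧ OccursAt u w k := hrec j
    exact ⟨Nat.find hex, (Nat.find_spec hex).1, (Nat.find_spec hex).2,
      fun l hl1 hl2 hol => Nat.find_min hex hl2 ⟨hl1, hol⟩⟩
  obtain ⟨j0, hj0⟩ := hw
  obtain ⟨k0, hk01, hk02, hk03⟩ := hnext j0
  set p := k0 - j0 with hpdef
  set v1 := factorAt u j0 p with hv1def
  have hv1 : v1 ∈ returnWords u w := ⟨j0, k0, hk01, hj0, hk02, hk03, rfl⟩
  have hppos : 0 < p := by omega
  have hv2ex : ∃ v2 ∈ returnWords u w, v2 ≠ v1 := by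
    by_contra hcon
    push_neg at hcon
    have hstep : ∀ j, OccursAt u w j → OccursAt u w (j + p) ∧ factorAt u j p = v1 := by
      intro j hj
      obtain ⟨k, hk1, hk2, hk3⟩ := hnext j
      have hmem : factorAt u j (k - j) ∈ returnWords u w := ⟨j, k, hk1, hj, hk2, hk3, rfl⟩
      have heq := hcon _ hmem
      have h1 : v1.length = k - j := by rw [← heq, factorAt_length]
      have h2 : v1.length = p := by rw [hv1def, factorAt_length]
      have hlen : k - j = p := by omega
      have hkjp : k = j + p := by omega
      rw [hlen] at heq
      rw [hkjp] at hk2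
      exact ⟨hk2, heq⟩
    have hcover : ∀ t, ∃ j, OccursAt u w j ∧ j ≤ j0 + t ∧ j0 + t < j + p := by
      intro t
      induction t with
      | zero => exact ⟨j0, hj0, le_refl _, by omega⟩
      | succ t ih =>
        obtain ⟨j, hj, ha, hb⟩ := ih
        by_cases hc : j0 + t + 1 < j + p
        · exact ⟨j, hj, by omega, by omega⟩
        · exact ⟨j + p, (hstep j hj).1, by omega, by omega⟩
    refine haper ⟨p, hppos, j0, fun x hx => ?_⟩
    obtain ⟨j, hj, ha, hb⟩ := hcover (x - j0)
    have e1 : factorAt u j p = v1 := (hstep j hj).2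
    have e2 : factorAt u (j + p) p = v1 := (hstep (j + p) (hstep j hj).1).2
    have e3 := factorAt_eq_iff.mp (e2.trans e1.symm) (x - j) (by omega)
    convert e3 using 2 <;> omega
  obtain ⟨v2, hv2, hv2ne⟩ := hv2ex
  have hsub : returnWords u w ⊆ {v1, v2} := by
    intro v hv
    by_contra hvn
    simp only [Set.mem_insert_iff, Set.mem_singleton_iff] at hvn
    push_neg at hvn
    exact atMostTwo_returnWords hcard hcompl hv1 hv2 hv hv2ne.symm
      (fun h => hvn.1 h.symm) (fun h => hvn.2 h.symm)
  have heq2 : returnWords u w = {v1, v2} := by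
    apply Set.Subset.antisymm hsub
    rintro x (rfl | rfl)
    · exact hv1
    · exact hv2
  rw [heq2]
  exact ⟨(Set.finite_singleton v2).insert v1, Set.ncard_pair hv2ne.symm⟩
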